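/- Boundedness of Bregman extragradient iterates: suppose ω : ℝ^d → ℝ is strongly convex with modulus μ > 0, F : ℝ^d → ℝ^d is λ-relatively Lipschitz with respect to ω and monotone, the set {u : F(u) = 0} is nonempty, and the step sizes satisfy 0 < λα_k ≤ 1 for all k. Then the sequence {u_k} generated by the BEG method is bounded. -/

import Mathlib

open scoped RealInnerProductSpace

/-- `vs` is a subgradient of `ω` at `v`. -/
def IsSubgrad {d : ℕ} (ω : EuclideanSpace ℝ (Fin d) → ℝ)
    (v vs : EuclideanSpace ℝ (Fin d)) : Prop :=
  ∀ w, ω v + ⟪vs, w - v⟫ ≤ ω w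

/-- The Bregman distance `D_ω^{vs}(u, v) = ω(u) − ω(v) − ⟨vs, u − v⟩`. -/
noncomputable def breg {d : ℕ} (ω : EuclideanSpace ℝ (Fin d) → ℝ)
    (vs u v : EuclideanSpace ℝ (Fin d)) : ℝ :=
  ω u - ω v - ⟪vs, u - v⟫

/-- `F` is `lam`-relatively Lipschitz with respect to `ω`. -/
def RelLip {d : ℕ} (lam : ℝ)
    (F : EuclideanSpace ℝ (Fin d) → EuclideanSpace ℝ (Fin d))
    (ω : EuclideanSpace ℝ (Fin d) → ℝ) : Prop :=
  ∀ u v z us vs, IsSubgrad ω u us → IsSubgrad ω v vs →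
    ⟪F v - F u, v - z⟫ ≤ lam * (breg ω us v u + breg ω vs z v)

lemma breg_nonneg {d : ℕ} {ω : EuclideanSpace ℝ (Fin d) → ℝ}
    {v vs : EuclideanSpace ℝ (Fin d)} (h : IsSubgrad ω v vs)
    (w : EuclideanSpace ℝ (Fin d)) : 0 ≤ breg ω vs w v := by
  have := h w
  simp only [breg]
  linarith

lemma breg_strong {d : ℕ} {μ : ℝ} (hμ : 0 < μ) {ω : EuclideanSpace ℝ (Fin d) → ℝ}
    (hω : StrongConvexOn Set.univ μ ω) {v vs : EuclideanSpace ℝ (Fin d)}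
    (h : IsSubgrad ω v vs) (w : EuclideanSpace ℝ (Fin d)) :
    μ / 2 * ‖w - v‖ ^ 2 ≤ breg ω vs w v := by
  have hc0 : (0:ℝ) ≤ μ / 2 * ‖w - v‖ ^ 2 := by positivity
  have hb0 : 0 ≤ breg ω vs w v := breg_nonneg h w
  have key : ∀ t : ℝ, 0 < t → t < 1 →
      (1 - t) * (μ / 2 * ‖w - v‖ ^ 2) ≤ breg ω vs w v := by
    intro t ht ht1
    have hconv := hω.2 (Set.mem_univ w) (Set.mem_univ v) ht.le (by linarith : (0:ℝ) ≤ 1 - t)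
      (by ring)
    have hsub := h (t • w + (1 - t) • v)
    have hpt : (t • w + (1 - t) • v) - v = t • (w - v) := by
      rw [smul_sub]; module
    rw [hpt, real_inner_smul_right] at hsub
    simp only [smul_eq_mul] at hconv
    have hgoal : 0 ≤ t * ((ω w - ω v - ⟪vs, w - v⟫) - (1 - t) * (μ / 2 * ‖w - v‖ ^ 2)) := by
      nlinarith [hconv, hsub]
    simp only [breg]
    nlinarith [hgoal, ht]
  by_contra hcon
  push_neg at hcon
  set c : ℝ := μ / 2 * ‖w - v‖ ^ 2 with hc
  have hcpos : 0 < c := lt_of_le_of_lt hb0 hcon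
  have ht := key ((c - breg ω vs w v) / (2 * c))
    (div_pos (by linarith) (by positivity))
    (by rw [div_lt_one (by positivity)]; nlinarith)
  have : (1 - (c - breg ω vs w v) / (2 * c)) * c = c - (c - breg ω vs w v) / 2 := by
    field_simp
  rw [this] at ht
  linarith

/-- **Boundedness of Bregman extragradient iterates.** -/
theorem beg_iterates_bounded {d : ℕ} (μ lam : ℝ) (hμ : 0 < μ)
    (ω : EuclideanSpace ℝ (Fin d) → ℝ) (hω : StrongConvexOn Set.univ μ ω)
    (F : EuclideanSpace ℝ (Fin d) → EuclideanSpace ℝ (Fin d))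
    (hF : RelLip lam F ω)
    (hmono : ∀ u v, 0 ≤ ⟪F u - F v, u - v⟫)
    (hzero : ∃ z, F z = 0)
    (α : ℕ → ℝ) (hα : ∀ k, 0 < α k)
    (hstep : ∀ k, 0 < lam * α k ∧ lam * α k ≤ 1)
    (u ubar us : ℕ → EuclideanSpace ℝ (Fin d))
    (hsubu : ∀ k, IsSubgrad ω (u k) (us k))
    (hsubbar : ∀ k, IsSubgrad ω (ubar k) (us k - α k • F (u k)))
    (hupd : ∀ k, us (k + 1) = us k - α k • F (ubar k)) :
    ∃ C : ℝ, ∀ k, ‖u k‖ ≤ C := by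
  obtain ⟨z, hz⟩ := hzero
  set D : ℕ → ℝ := fun k => breg ω (us k) z (u k) with hD
  have hdesc : ∀ k, D (k + 1) ≤ D k := by
    intro k
    have hz' : ⟪F (ubar k), z - ubar k⟫ ≤ 0 := by
      have hm := hmono (ubar k) z
      rw [hz] at hm
      have he : ⟪F (ubar k), z - ubar k⟫ = -⟪F (ubar k) - 0, ubar k - z⟫ := by
        rw [sub_zero, ← inner_neg_right, neg_sub]
      rw [he]; linarith
    have hlip := hF (u k) (ubar k) (u (k + 1)) (us k) (us k - α k • F (u k))
      (hsubu k) (hsubbar k)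
    have hS1 : 0 ≤ breg ω (us k) (ubar k) (u k) := breg_nonneg (hsubu k) _
    have hS2 : 0 ≤ breg ω (us k - α k • F (u k)) (u (k + 1)) (ubar k) :=
      breg_nonneg (hsubbar k) _
    have hid : D (k + 1) = D k - breg ω (us k) (ubar k) (u k)
        - breg ω (us k - α k • F (u k)) (u (k + 1)) (ubar k)
        + α k * ⟪F (ubar k), z - ubar k⟫
        + α k * ⟪F (ubar k) - F (u k), ubar k - u (k + 1)⟫ := by
      simp only [hD, breg, hupd k, inner_sub_left, inner_sub_right, real_inner_smul_left]
      ring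
    have hstep' := hstep k
    nlinarith [mul_le_mul_of_nonneg_left hlip (hα k).le,
      mul_nonneg (sub_nonneg.mpr hstep'.2) (add_nonneg hS1 hS2),
      mul_nonneg (hα k).le (neg_nonneg.mpr hz')]
  have hDk : ∀ k, D k ≤ D 0 := by
    intro k
    induction k with
    | zero => exact le_refl _
    | succ n ih => exact le_trans (hdesc n) ih
  refine ⟨‖z‖ + Real.sqrt (2 * D 0 / μ), fun k => ?_⟩
  have hsq : μ / 2 * ‖z - u k‖ ^ 2 ≤ D k := breg_strong hμ hω (hsubu k) z
  have h1 : ‖u k - z‖ ^ 2 ≤ 2 * D 0 / μ := by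
    rw [norm_sub_rev]
    rw [le_div_iff₀ hμ]
    nlinarith [hDk k]
  have h2 : ‖u k - z‖ ≤ Real.sqrt (2 * D 0 / μ) := by
    rw [← Real.sqrt_sq (norm_nonneg (u k - z))]
    exact Real.sqrt_le_sqrt h1
  calc ‖u k‖ = ‖(u k - z) + z‖ := by rw [sub_add_cancel]
    _ ≤ ‖u k - z‖ + ‖z‖ := norm_add_le _ _
    _ ≤ Real.sqrt (2 * D 0 / μ) + ‖z‖ := by linarith
    _ = ‖z‖ + Real.sqrt (2 * D 0 / μ) := by ring
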